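/- Let A = lim_→ A_n be a sequential inductive limit of C*-algebras with injective connecting maps such that in each A_n the pseudometrics d_U and d_W agree on positive elements. Then for positive elements a, b in the dense union ∪_n A_n ⊆ A, d_U^A(a, b) ≤ d_W^{A_n}(a, b) whenever a, b ∈ A_n; consequently, using d_W^A ≤ d_U^A ≤ d_U computed in any subalgebra and continuity of d_U, d_W with respect to the norm, d_U = d_W on all positive elements of A. -/

import Mathlib

open Filter Topology

/-- The distance between unitary orbits. -/
noncomputable def dU {A : Type*} [CStarAlgebra A] (a b : A) : ℝ :=
  sInf {r : ℝ | ∃ u ∈ unitary A, r = ‖u * a * star u - b‖}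

/-- `cut t a = (a - t)₊`, the positive part of `a - t·1`. -/
noncomputable def cut {A : Type*} [CStarAlgebra A] (t : ℝ) (a : A) : A :=
  cfc (fun x : ℝ => max (x - t) 0) a

/-- Cuntz subequivalence (within the algebra). -/
def CuntzLE {A : Type*} [CStarAlgebra A] (a b : A) : Prop :=
  ∃ v : ℕ → A, Tendsto (fun k => ‖a - v k * b * star (v k)‖) atTop (𝓝 0)

/-- The Cuntz pseudometric `d_W`. -/
noncomputable def dW {A : Type*} [CStarAlgebra A] (a b : A) : ℝ :=
  sInf {r : ℝ | 0 < r ∧ ∀ t : ℝ, 0 < t →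
    CuntzLE (cut (t + r) a) (cut t b) ∧ CuntzLE (cut (t + r) b) (cut t a)}

set_option linter.unusedSectionVars false
set_option linter.unusedVariables false
set_option maxHeartbeats 2000000

section basic
variable {A : Type*} [CStarAlgebra A] [PartialOrder A] [StarOrderedRing A]

lemma cut_nonneg (t : ℝ) (a : A) : 0 ≤ cut t a :=
  cfc_nonneg (fun x _ => le_max_right _ _)

lemma cut_isSelfAdjoint (t : ℝ) (a : A) : IsSelfAdjoint (cut t a) :=
  cfc_predicate _ a

lemma cut_mono_param {a : A} {s t : ℝ} (hst : s ≤ t) : cut t a ≤ cut s a :=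
  cfc_mono (fun x _ => max_le_max (by linarith) le_rfl)

lemma cut_cut {a : A} (ha : IsSelfAdjoint a) {s t : ℝ} (hs : 0 ≤ s) :
    cut s (cut t a) = cut (s + t) a := by
  unfold cut
  rw [← cfc_comp (fun x : ℝ => max (x - s) 0) (fun x : ℝ => max (x - t) 0) a ha]
  refine cfc_congr fun x _ => ?_
  simp only [Function.comp]
  rcases le_total x t with h | h
  · rw [max_eq_right (by linarith : x - t ≤ 0), max_eq_right (by linarith : 0 - s ≤ 0),
      max_eq_right (by linarith : x - (s + t) ≤ 0)]
  · rcases le_total x (s + t) with h2 | h2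
    · rw [max_eq_left (by linarith : (0:ℝ) ≤ x - t), max_eq_right (by linarith),
        max_eq_right (by linarith)]
    · rw [max_eq_left (by linarith : (0:ℝ) ≤ x - t), max_eq_left (by linarith),
        max_eq_left (by linarith)]
      ring

lemma spec_le_norm {a : A} (ha : IsSelfAdjoint a) {x : ℝ} (hx : x ∈ spectrum ℝ a) :
    |x| ≤ ‖a‖ := by
  have := norm_apply_le_norm_cfc (id : ℝ → ℝ) a hx (by fun_prop) ha
  simpa [cfc_id ℝ a ha] using this

lemma cut_eq_zero {a : A} (ha : 0 ≤ a) {t : ℝ} (ht : ‖a‖ ≤ t) : cut t a = 0 := by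
  have : cut t a = cfc (fun _ : ℝ => (0:ℝ)) a := by
    refine cfc_congr fun x hx => ?_
    have h1 : x ≤ ‖a‖ := (le_abs_self x).trans (spec_le_norm ha.isSelfAdjoint hx)
    rw [max_eq_right (by linarith)]
  rw [this, cfc_const_zero]

lemma one_nonneg' : (0 : A) ≤ 1 := by simpa using star_mul_self_nonneg (1 : A)

lemma algebraMap_mono' {r s : ℝ} (h : r ≤ s) :
    algebraMap ℝ A r ≤ algebraMap ℝ A s := by
  rw [← sub_nonneg, ← map_sub, Algebra.algebraMap_eq_smul_one]
  rw [← cfc_const_mul_id (s - r) (1:A) (one_nonneg' (A := A)).isSelfAdjoint]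
  exact cfc_nonneg fun t ht =>
    mul_nonneg (by linarith) (spectrum_nonneg_of_nonneg one_nonneg' ht)

lemma le_add_algebraMap_of_norm_le {a b : A} (hsa : IsSelfAdjoint a) (hsb : IsSelfAdjoint b)
    {δ : ℝ} (h : ‖a - b‖ ≤ δ) : a ≤ b + algebraMap ℝ A δ := by
  have h1 : a - b ≤ algebraMap ℝ A ‖a - b‖ := IsSelfAdjoint.le_algebraMap_norm_self (hsa.sub hsb)
  have h2 := algebraMap_mono' (A := A) h
  calc a = b + (a - b) := by abel
    _ ≤ b + algebraMap ℝ A ‖a - b‖ := add_le_add_right h1 b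
    _ ≤ b + algebraMap ℝ A δ := add_le_add_right h2 b

lemma le_cut_add {b : A} (hb : 0 ≤ b) (t : ℝ) : b ≤ cut t b + algebraMap ℝ A t := by
  have hsb : IsSelfAdjoint b := hb.isSelfAdjoint
  have : cut t b + algebraMap ℝ A t = cfc (fun x : ℝ => max (x - t) 0 + t) b := by
    rw [cfc_add b (fun x : ℝ => max (x - t) 0) (fun _ => t) (by fun_prop) continuousOn_const,
      cfc_const t b hsb]
    rfl
  rw [this]
  conv_lhs => rw [← cfc_id' ℝ b hsb]
  exact cfc_mono fun x _ => by
    rcases le_total x t with h | h <;> simp [max_eq_right, max_eq_left, sub_nonneg, *]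

end basic

section cuntz
variable {A : Type*} [CStarAlgebra A] [PartialOrder A] [StarOrderedRing A]

lemma CuntzLE.of_forall {a b : A} (h : ∀ δ : ℝ, 0 < δ → ∃ v : A, ‖a - v * b * star v‖ ≤ δ) :
    CuntzLE a b := by
  choose v hv using fun n : ℕ => h (1 / (n + 1)) (by positivity)
  exact ⟨v, squeeze_zero (fun n => norm_nonneg _) hv tendsto_one_div_add_atTop_nhds_zero_nat⟩

lemma CuntzLE.zero (b : A) : CuntzLE 0 b :=
  ⟨fun _ => 0, by simpa using tendsto_const_nhds⟩

lemma CuntzLE.conj (v b : A) : CuntzLE (v * b * star v) b :=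
  ⟨fun _ => v, by simpa using tendsto_const_nhds⟩

lemma CuntzLE.trans {a b c : A} (h1 : CuntzLE a b) (h2 : CuntzLE b c) : CuntzLE a c := by
  obtain ⟨v, hv⟩ := h1
  obtain ⟨w, hw⟩ := h2
  refine CuntzLE.of_forall fun δ hδ => ?_
  obtain ⟨k, hk⟩ := (hv.eventually (gt_mem_nhds (half_pos hδ))).exists
  have hvk : (0:ℝ) < (‖v k‖ + 1)^2 := by positivity
  obtain ⟨m, hm⟩ :=
    (hw.eventually (gt_mem_nhds (show (0:ℝ) < δ/2/(‖v k‖+1)^2 by positivity))).exists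
  refine ⟨v k * w m, ?_⟩
  have key : a - (v k * w m) * c * star (v k * w m)
      = (a - v k * b * star (v k)) + v k * (b - w m * c * star (w m)) * star (v k) := by
    simp only [star_mul]
    noncomm_ring
  rw [key]
  calc ‖(a - v k * b * star (v k)) + v k * (b - w m * c * star (w m)) * star (v k)‖
      ≤ ‖a - v k * b * star (v k)‖ + ‖v k * (b - w m * c * star (w m)) * star (v k)‖ :=
        norm_add_le _ _
    _ ≤ δ/2 + ‖v k‖ * ‖b - w m * c * star (w m)‖ * ‖v k‖ := by
        gcongr
        calc ‖v k * (b - w m * c * star (w m)) * star (v k)‖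
            ≤ ‖v k * (b - w m * c * star (w m))‖ * ‖star (v k)‖ := norm_mul_le _ _
          _ ≤ ‖v k‖ * ‖b - w m * c * star (w m)‖ * ‖star (v k)‖ := by
              gcongr; exact norm_mul_le _ _
          _ = ‖v k‖ * ‖b - w m * c * star (w m)‖ * ‖v k‖ := by rw [norm_star]
    _ ≤ δ/2 + δ/2 := by
        have h1 : ‖v k‖ * ‖b - w m * c * star (w m)‖ * ‖v k‖
            ≤ (‖v k‖+1)^2 * (δ/2/(‖v k‖+1)^2) := by
          calc ‖v k‖ * ‖b - w m * c * star (w m)‖ * ‖v k‖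
              ≤ (‖v k‖+1) * (δ/2/(‖v k‖+1)^2) * (‖v k‖+1) := by
                gcongr <;> first | linarith [norm_nonneg (v k), hm.le] | positivity
            _ = (‖v k‖+1)^2 * (δ/2/(‖v k‖+1)^2) := by ring
        have h2 : (‖v k‖+1)^2 * (δ/2/(‖v k‖+1)^2) = δ/2 := by
          field_simp
        linarith
    _ = δ := by ring

lemma cfc_conj_cfc' {b : A} {p q : ℝ → ℝ}
    (hp : ContinuousOn p (spectrum ℝ b)) (hq : ContinuousOn q (spectrum ℝ b)) :
    cfc p b * cfc q b * cfc p b = cfc (fun x => p x * q x * p x) b := by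
  symm
  calc cfc (fun x => p x * q x * p x) b
      = cfc (fun x => p x * q x) b * cfc p b :=
        cfc_mul (fun x => p x * q x) p b (hp.mul hq) hp
    _ = (cfc p b * cfc q b) * cfc p b := by rw [cfc_mul p q b hp hq]

lemma cfc_conj_cfc {b : A} (hsb : IsSelfAdjoint b) {p : ℝ → ℝ}
    (hp : ContinuousOn p (spectrum ℝ b)) :
    cfc p b * b * cfc p b = cfc (fun x => p x * x * p x) b := by
  symm
  calc cfc (fun x => p x * x * p x) b
      = cfc (fun x => p x * x) b * cfc p b :=
        cfc_mul (fun x => p x * x) p b (hp.mul continuousOn_id) hp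
    _ = (cfc p b * cfc (fun x : ℝ => x) b) * cfc p b := by
        rw [cfc_mul p (fun x : ℝ => x) b hp continuousOn_id]
    _ = cfc p b * b * cfc p b := by rw [cfc_id' ℝ b hsb]

lemma smul_nonneg_real {r : ℝ} (hr : 0 ≤ r) {x : A} (hx : 0 ≤ x) : 0 ≤ r • x := by
  rw [← cfc_const_mul_id r x hx.isSelfAdjoint]
  exact cfc_nonneg (fun t ht => mul_nonneg hr (spectrum_nonneg_of_nonneg hx ht))

lemma CuntzLE.of_le {a b : A} (ha : 0 ≤ a) (hab : a ≤ b) : CuntzLE a b := by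
  have hb : 0 ≤ b := ha.trans hab
  have hsa : IsSelfAdjoint a := ha.isSelfAdjoint
  have hsb : IsSelfAdjoint b := hb.isSelfAdjoint
  have specb : ∀ x ∈ spectrum ℝ b, (0:ℝ) ≤ x := fun x hx => spectrum_nonneg_of_nonneg hb hx
  have speca : ∀ x ∈ spectrum ℝ a, (0:ℝ) ≤ x := fun x hx => spectrum_nonneg_of_nonneg ha hx
  refine CuntzLE.of_forall fun δ hδ => ?_
  set h : ℝ → ℝ := fun x => (Real.sqrt (x + δ))⁻¹ with hh
  have hcont : ContinuousOn h (spectrum ℝ b) := by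
    apply ContinuousOn.inv₀ (by fun_prop)
    intro x hx
    exact ne_of_gt (Real.sqrt_pos.2 (by linarith [specb x hx]))
  set K : ℝ → ℝ := fun x => h x * x * h x with hK
  have hKcont : ContinuousOn K (spectrum ℝ b) := (hcont.mul continuousOn_id).mul hcont
  set G : ℝ → ℝ := fun x => 1 - K x with hG
  have hGcont : ContinuousOn G (spectrum ℝ b) := continuousOn_const.sub hKcont
  have hKx : ∀ x ∈ spectrum ℝ b, K x = x * (x + δ)⁻¹ := by
    intro x hx
    have hx0 := specb x hx
    have h1 : h x * h x = (x + δ)⁻¹ := by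
      simp only [hh, ← mul_inv]
      rw [Real.mul_self_sqrt (by linarith)]
    calc K x = x * (h x * h x) := by simp only [hK]; ring
      _ = x * (x + δ)⁻¹ := by rw [h1]
  have hGnonneg : ∀ x ∈ spectrum ℝ b, 0 ≤ G x := by
    intro x hx
    have hx0 := specb x hx
    have hq : (x + δ)⁻¹ * (x + δ) = 1 := inv_mul_cancel₀ (by linarith)
    have hq0 : (0:ℝ) ≤ (x + δ)⁻¹ := by positivity
    simp only [hG, hKx x hx]
    nlinarith
  set z : A := cfc h b with hzdef
  set sq : A := cfc Real.sqrt a with hsqdef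
  have hzsa : IsSelfAdjoint z := cfc_predicate h b
  have hsqsa : IsSelfAdjoint sq := cfc_predicate Real.sqrt a
  have hsqsq : sq * sq = a := by
    rw [hsqdef, ← cfc_mul Real.sqrt Real.sqrt a Real.continuous_sqrt.continuousOn
      Real.continuous_sqrt.continuousOn]
    have : cfc (fun x => Real.sqrt x * Real.sqrt x) a = cfc (fun x : ℝ => x) a :=
      cfc_congr (fun x hx => Real.mul_self_sqrt (speca x hx))
    rw [this, cfc_id' ℝ a hsa]
  set v : A := sq * z with hvdef
  have hstarv : star v = z * sq := by rw [hvdef, star_mul, hzsa.star_eq, hsqsa.star_eq]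
  have hzbz : z * b * z = cfc K b := cfc_conj_cfc hsb hcont
  have hGb : cfc G b = 1 - cfc K b := by
    rw [hG, cfc_sub (fun _ : ℝ => (1:ℝ)) K b continuousOn_const hKcont, cfc_const_one ℝ b]
  have hdiff : a - v * b * star v = sq * cfc G b * sq := by
    rw [hstarv, hvdef, hGb]
    have expand : sq * z * b * (z * sq) = sq * (z * b * z) * sq := by noncomm_ring
    rw [expand, hzbz]
    have : sq * (1 - cfc K b) * sq = sq * sq - sq * cfc K b * sq := by noncomm_ring
    rw [this, hsqsq]
  set s : A := cfc (fun x => Real.sqrt (G x)) b with hsdef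
  have hscont : ContinuousOn (fun x => Real.sqrt (G x)) (spectrum ℝ b) :=
    Real.continuous_sqrt.comp_continuousOn hGcont
  have hssa : IsSelfAdjoint s := cfc_predicate _ b
  have hss : s * s = cfc G b := by
    rw [hsdef, ← cfc_mul _ _ b hscont hscont]
    exact cfc_congr (fun x hx => Real.mul_self_sqrt (hGnonneg x hx))
  set w : A := s * sq with hwdef
  have hstarw : star w = sq * s := by rw [hwdef, star_mul, hssa.star_eq, hsqsa.star_eq]
  have hdiff2 : a - v * b * star v = star w * w := by
    rw [hdiff, hstarw, hwdef, ← hss]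
    noncomm_ring
  have hwws : w * star w = s * a * s := by
    rw [hstarw, hwdef, ← hsqsq]
    noncomm_ring
  have hnorm : ‖a - v * b * star v‖ = ‖s * a * s‖ := by
    rw [hdiff2, CStarRing.norm_star_mul_self, ← CStarRing.norm_self_mul_star, hwws]
  have hsas : 0 ≤ s * a * s := by
    have := star_right_conjugate_nonneg ha s
    rwa [hssa.star_eq] at this
  have hsbs : s * a * s ≤ s * b * s := by
    have := star_left_conjugate_le_conjugate hab s
    rwa [hssa.star_eq] at this
  have hnorm2 : ‖s * a * s‖ ≤ ‖s * b * s‖ :=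
    CStarAlgebra.norm_le_norm_of_nonneg_of_le hsas hsbs
  have hsbs_eq : s * b * s = cfc (fun x => Real.sqrt (G x) * x * Real.sqrt (G x)) b :=
    cfc_conj_cfc hsb hscont
  have hnorm3 : ‖s * b * s‖ ≤ δ := by
    rw [hsbs_eq]
    refine norm_cfc_le hδ.le fun x hx => ?_
    have hg := hGnonneg x hx
    have hx0 := specb x hx
    have heq : Real.sqrt (G x) * x * Real.sqrt (G x) = G x * x := by
      rw [show Real.sqrt (G x) * x * Real.sqrt (G x)
          = (Real.sqrt (G x) * Real.sqrt (G x)) * x from by ring, Real.mul_self_sqrt hg]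
    rw [heq, Real.norm_of_nonneg (by positivity)]
    have hq : (x + δ)⁻¹ * (x + δ) = 1 := inv_mul_cancel₀ (by linarith)
    have hq0 : (0:ℝ) ≤ (x + δ)⁻¹ := by positivity
    simp only [hG, hKx x hx]
    have h1 : 1 - x*(x+δ)⁻¹ = δ*(x+δ)⁻¹ := by field_simp; ring
    have h2 : (x+δ)⁻¹ * x ≤ 1 := by
      rw [← hq]
      exact mul_le_mul_of_nonneg_left (by linarith) hq0
    rw [h1]
    nlinarith
  exact ⟨v, by rw [hnorm]; linarith⟩

lemma cuntz_core {a b : A} (ha : 0 ≤ a) (hb : 0 ≤ b) {δ σ' : ℝ} (hδ : 0 ≤ δ) (hσ : 0 < σ')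
    (hab : a ≤ b + algebraMap ℝ A δ) : CuntzLE (cut (δ + σ') a) b := by
  have hsa : IsSelfAdjoint a := ha.isSelfAdjoint
  set f : ℝ → ℝ := fun x => max (x - (δ + σ')) 0 with hf
  have hfc : ContinuousOn f (spectrum ℝ a) := by fun_prop
  set h : ℝ → ℝ := fun x => Real.sqrt (f x) with hh
  have hhc : ContinuousOn h (spectrum ℝ a) := by fun_prop
  have hfnn : ∀ x : ℝ, 0 ≤ f x := fun x => le_max_right _ _
  have hhh : ∀ x : ℝ, h x * h x = f x := fun x => Real.mul_self_sqrt (hfnn x)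
  set e : A := cut (δ + σ') a with he
  have hecfc : e = cfc f a := rfl
  set eh : A := cfc h a with heh
  have hehsa : IsSelfAdjoint eh := cfc_predicate h a
  have hsub : cfc (fun x : ℝ => x - δ) a = a - algebraMap ℝ A δ := by
    rw [cfc_sub (fun x : ℝ => x) (fun _ => δ) a continuousOn_id continuousOn_const,
      cfc_id' ℝ a hsa, cfc_const δ a hsa]
  have hconj : eh * (a - algebraMap ℝ A δ) * eh = cfc (fun x => h x * (x - δ) * h x) a := by
    rw [← hsub, heh]
    exact cfc_conj_cfc' hhc (continuousOn_id.sub continuousOn_const)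
  have step1 : σ' • e ≤ eh * (a - algebraMap ℝ A δ) * eh := by
    rw [hconj, hecfc, ← cfc_const_mul σ' f a hfc]
    refine cfc_mono (fun x hx => ?_) (continuousOn_const.mul hfc)
      ((hhc.mul (continuousOn_id.sub continuousOn_const)).mul hhc)
    have heq : h x * (x - δ) * h x = f x * (x - δ) := by
      rw [show h x * (x-δ) * h x = (h x * h x) * (x - δ) from by ring, hhh x]
    rw [heq]
    rcases le_or_gt x (δ + σ') with hc | hc
    · rw [hf]; simp only
      rw [max_eq_right (by linarith)]
      simp
    · have hfx : f x = x - (δ + σ') := by rw [hf]; simp only; rw [max_eq_left (by linarith)]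
      have hfx0 : 0 ≤ f x := hfnn x
      nlinarith
  have hab' : a - algebraMap ℝ A δ ≤ b := sub_le_iff_le_add.2 hab
  have step2 : eh * (a - algebraMap ℝ A δ) * eh ≤ eh * b * eh := by
    have := star_left_conjugate_le_conjugate hab' eh
    rwa [hehsa.star_eq] at this
  have key : σ' • e ≤ eh * b * eh := step1.trans step2
  set c : ℝ := Real.sqrt σ'⁻¹ with hc
  set v : A := c • eh with hv
  have hvc : v * b * star v = σ'⁻¹ • (eh * b * eh) := by
    rw [hv, star_smul, star_trivial, hehsa.star_eq, smul_mul_assoc, smul_mul_assoc,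
      mul_smul_comm, smul_smul]
    rw [show c * c = σ'⁻¹ from Real.mul_self_sqrt (by positivity)]
  have he_le : e ≤ v * b * star v := by
    rw [hvc]
    have h0 : 0 ≤ σ'⁻¹ • (eh * b * eh - σ' • e) :=
      smul_nonneg_real (by positivity) (sub_nonneg.2 key)
    rw [smul_sub, smul_smul, inv_mul_cancel₀ hσ.ne', one_smul] at h0
    exact sub_nonneg.1 h0
  exact (CuntzLE.of_le (cut_nonneg _ _) he_le).trans (CuntzLE.conj v b)

lemma cuntz_cut_of_le_add {a b : A} (ha : 0 ≤ a) (hb : 0 ≤ b) {δ t σ' : ℝ} (hδ : 0 ≤ δ)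
    (ht : 0 ≤ t) (hσ : 0 < σ') (hab : a ≤ b + algebraMap ℝ A δ) :
    CuntzLE (cut (t + δ + σ') a) (cut t b) := by
  have h2 : a ≤ cut t b + algebraMap ℝ A (t + δ) := by
    calc a ≤ b + algebraMap ℝ A δ := hab
      _ ≤ (cut t b + algebraMap ℝ A t) + algebraMap ℝ A δ :=
          add_le_add_left (le_cut_add hb t) _
      _ = cut t b + algebraMap ℝ A (t + δ) := by rw [map_add]; abel
  have := cuntz_core ha (cut_nonneg t b) (by linarith) hσ h2
  rwa [show t + δ + σ' = (t + δ) + σ' from by ring] at this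

lemma cuntz_of_norm {a b : A} (ha : 0 ≤ a) (hb : 0 ≤ b) {δ : ℝ} (h : ‖a - b‖ ≤ δ)
    {t σ' : ℝ} (ht : 0 ≤ t) (hσ : 0 < σ') : CuntzLE (cut (t + δ + σ') a) (cut t b) :=
  cuntz_cut_of_le_add ha hb ((norm_nonneg _).trans h) ht hσ
    (le_add_algebraMap_of_norm_le ha.isSelfAdjoint hb.isSelfAdjoint h)

lemma cuntz_of_norm_conj {c d w : A} (hc : 0 ≤ c) (hd : 0 ≤ d) {θ σ' : ℝ} (hθ : 0 ≤ θ)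
    (hσ : 0 < σ') (h : ‖c - w * d * star w‖ ≤ θ) : CuntzLE (cut (θ + σ') c) d := by
  have hwdw : 0 ≤ w * d * star w := star_right_conjugate_nonneg hd w
  exact (cuntz_core hc hwdw hθ hσ
    (le_add_algebraMap_of_norm_le hc.isSelfAdjoint hwdw.isSelfAdjoint h)).trans
    (CuntzLE.conj w d)

lemma cuntz_cut_mono {a : A} (ha : 0 ≤ a) {s t : ℝ} (h : s ≤ t) :
    CuntzLE (cut t a) (cut s a) :=
  CuntzLE.of_le (cut_nonneg _ _) (cut_mono_param h)

end cuntz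

/-- Conjugation by a unitary as a star algebra homomorphism. -/
noncomputable def unitaryConj {A : Type*} [CStarAlgebra A] {u : A} (hu : u ∈ unitary A) :
    A →⋆ₐ[ℂ] A where
  toFun x := u * x * star u
  map_one' := by show u * 1 * star u = 1; rw [mul_one, Unitary.mul_star_self_of_mem hu]
  map_mul' x y := by
    have h1 : star u * u = 1 := Unitary.star_mul_self_of_mem hu
    calc u * (x * y) * star u = u * x * (star u * u) * y * star u := by rw [h1]; noncomm_ring
      _ = u * x * star u * (u * y * star u) := by noncomm_ring
  map_zero' := by simp
  map_add' x y := by noncomm_ring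
  commutes' c := by
    simp only [Algebra.algebraMap_eq_smul_one]
    rw [mul_smul_comm, mul_one, smul_mul_assoc, Unitary.mul_star_self_of_mem hu]
  map_star' x := by simp only [star_mul, star_star]; noncomm_ring

lemma unitaryConj_apply {A : Type*} [CStarAlgebra A] {u : A} (hu : u ∈ unitary A) (x : A) :
    unitaryConj hu x = u * x * star u := rfl

lemma unitaryConj_continuous {A : Type*} [CStarAlgebra A] {u : A} (hu : u ∈ unitary A) :
    Continuous (unitaryConj hu) := by
  have : Continuous (fun x : A => u * x * star u) := by fun_prop
  exact this

section maps
variable {A B : Type*} [CStarAlgebra A] [PartialOrder A] [StarOrderedRing A]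
  [CStarAlgebra B] [PartialOrder B] [StarOrderedRing B]

lemma map_cut (φ : A →⋆ₐ[ℂ] B) (hφ : Continuous φ) {a : A} (ha : IsSelfAdjoint a) (t : ℝ) :
    φ (cut t a) = cut t (φ a) := by
  have hφa : IsSelfAdjoint (φ a) := by
    rw [IsSelfAdjoint, ← map_star, ha.star_eq]
  exact StarAlgHom.map_cfc φ (fun x : ℝ => max (x - t) 0) a (by fun_prop) hφ ha hφa

lemma cut_conj_unitary {u a : A} (hu : u ∈ unitary A) (ha : IsSelfAdjoint a) (t : ℝ) :
    cut t (u * a * star u) = u * cut t a * star u := by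
  have := map_cut (unitaryConj hu) (unitaryConj_continuous hu) ha t
  rw [unitaryConj_apply hu a] at this
  rw [← this, unitaryConj_apply]

end maps

section dudw
variable {A : Type*} [CStarAlgebra A] [PartialOrder A] [StarOrderedRing A]

lemma uSet_nonempty (a b : A) :
    {r : ℝ | ∃ u ∈ unitary A, r = ‖u * a * star u - b‖}.Nonempty :=
  ⟨‖(1:A) * a * star (1:A) - b‖, 1, (unitary A).one_mem, rfl⟩

lemma uSet_bddBelow (a b : A) :
    BddBelow {r : ℝ | ∃ u ∈ unitary A, r = ‖u * a * star u - b‖} :=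
  ⟨0, fun r ⟨u, hu, hr⟩ => hr ▸ norm_nonneg _⟩

lemma dU_le (a b : A) {u : A} (hu : u ∈ unitary A) : dU a b ≤ ‖u * a * star u - b‖ :=
  csInf_le (uSet_bddBelow a b) ⟨u, hu, rfl⟩

lemma dW_nonneg (a b : A) : 0 ≤ dW a b :=
  Real.sInf_nonneg (fun r hr => hr.1.le)

lemma wSet_bddBelow (a b : A) :
    BddBelow {r : ℝ | 0 < r ∧ ∀ t : ℝ, 0 < t →
      CuntzLE (cut (t + r) a) (cut t b) ∧ CuntzLE (cut (t + r) b) (cut t a)} :=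
  ⟨0, fun r hr => hr.1.le⟩

lemma wSet_mem_big {a b : A} (ha : 0 ≤ a) (hb : 0 ≤ b) :
    (‖a‖ + ‖b‖ + 1) ∈ {r : ℝ | 0 < r ∧ ∀ t : ℝ, 0 < t →
      CuntzLE (cut (t + r) a) (cut t b) ∧ CuntzLE (cut (t + r) b) (cut t a)} := by
  have h1 : (0:ℝ) < ‖a‖ + ‖b‖ + 1 := by positivity
  refine ⟨h1, fun t ht => ⟨?_, ?_⟩⟩
  · rw [cut_eq_zero ha (t := t + (‖a‖ + ‖b‖ + 1)) (by linarith [norm_nonneg b])]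
    exact CuntzLE.zero _
  · rw [cut_eq_zero hb (t := t + (‖a‖ + ‖b‖ + 1)) (by linarith [norm_nonneg a])]
    exact CuntzLE.zero _

lemma dW_le_dU {a b : A} (ha : 0 ≤ a) (hb : 0 ≤ b) : dW a b ≤ dU a b := by
  refine le_csInf (uSet_nonempty a b) ?_
  rintro r' ⟨u, hu, hr'⟩
  refine le_of_forall_pos_le_add fun ρ hρ => ?_
  have hr'0 : 0 ≤ r' := hr' ▸ norm_nonneg _
  set a' := u * a * star u with ha'def
  have ha' : 0 ≤ a' := star_right_conjugate_nonneg ha u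
  have hstaru : star u ∈ unitary A := Unitary.star_mem hu
  have hback : star u * a' * star (star u) = a := by
    rw [ha'def, star_star]
    have h1 : star u * u = 1 := Unitary.star_mul_self_of_mem hu
    calc star u * (u * a * star u) * u = (star u * u) * a * (star u * u) := by noncomm_ring
      _ = a := by rw [h1]; noncomm_ring
  refine csInf_le (wSet_bddBelow a b) ⟨by linarith, fun t ht => ⟨?_, ?_⟩⟩
  · have e1 : cut (t + (r' + ρ)) a = star u * cut (t + (r' + ρ)) a' * star (star u) := by
      conv_lhs => rw [← hback]
      rw [cut_conj_unitary hstaru ha'.isSelfAdjoint]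
    have c1 : CuntzLE (cut (t + (r' + ρ)) a) (cut (t + (r' + ρ)) a') := by
      rw [e1]; exact CuntzLE.conj _ _
    have c2 : CuntzLE (cut (t + (r' + ρ)) a') (cut t b) := by
      have := cuntz_of_norm ha' hb (le_of_eq hr'.symm) ht.le hρ
      rwa [show t + r' + ρ = t + (r' + ρ) from by ring] at this
    exact c1.trans c2
  · have hnormb : ‖b - a'‖ ≤ r' := by rw [norm_sub_rev]; exact le_of_eq hr'.symm
    have c1 : CuntzLE (cut (t + (r' + ρ)) b) (cut t a') := by
      have := cuntz_of_norm hb ha' hnormb ht.le hρ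
      rwa [show t + r' + ρ = t + (r' + ρ) from by ring] at this
    have c2 : CuntzLE (cut t a') (cut t a) := by
      rw [ha'def, cut_conj_unitary hu ha.isSelfAdjoint]
      exact CuntzLE.conj _ _
    exact c1.trans c2

lemma dU_lip [Nontrivial A] (a b a' b' : A) :
    dU a b ≤ dU a' b' + (‖a - a'‖ + ‖b - b'‖) := by
  rw [dU, ← sub_le_iff_le_add]
  refine le_csInf (uSet_nonempty a' b') ?_
  rintro r' ⟨u, hu, hr'⟩
  rw [sub_le_iff_le_add, hr']
  have key : ‖u * a * star u - b‖ ≤ ‖u * a' * star u - b'‖ + (‖a - a'‖ + ‖b - b'‖) := by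
    have e1 : u * a * star u - b
        = (u * a' * star u - b') + (u * (a - a') * star u + (b' - b)) := by noncomm_ring
    have e2 : ‖u * (a - a') * star u‖ = ‖a - a'‖ := by
      rw [CStarRing.norm_mul_mem_unitary _ (Unitary.star_mem hu),
        CStarRing.norm_mem_unitary_mul _ hu]
    calc ‖u * a * star u - b‖
        ≤ ‖u * a' * star u - b'‖ + ‖u * (a - a') * star u + (b' - b)‖ := by
          rw [e1]; exact norm_add_le _ _
      _ ≤ ‖u * a' * star u - b'‖ + (‖u * (a - a') * star u‖ + ‖b' - b‖) := by
          gcongr; exact norm_add_le _ _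
      _ = ‖u * a' * star u - b'‖ + (‖a - a'‖ + ‖b - b'‖) := by rw [e2, norm_sub_rev b' b]
  exact (dU_le a b hu).trans key

lemma dU_subsingleton [Subsingleton A] (a b : A) : dU a b = 0 := by
  have : {r : ℝ | ∃ u ∈ unitary A, r = ‖u * a * star u - b‖} = {0} := by
    ext r
    constructor
    · rintro ⟨u, hu, hr⟩
      simp only [Set.mem_singleton_iff, hr, Subsingleton.elim (u * a * star u - b) 0, norm_zero]
    · rintro rfl
      exact ⟨1, (unitary A).one_mem,
        by rw [Subsingleton.elim ((1:A) * a * star 1 - b) 0, norm_zero]⟩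
  rw [dU, this, csInf_singleton]

lemma dW_subsingleton [Subsingleton A] (a b : A) : dW a b = 0 := by
  have : {r : ℝ | 0 < r ∧ ∀ t : ℝ, 0 < t →
      CuntzLE (cut (t + r) a) (cut t b) ∧ CuntzLE (cut (t + r) b) (cut t a)} = Set.Ioi 0 := by
    ext r
    simp only [Set.mem_setOf_eq, Set.mem_Ioi]
    refine ⟨fun h => h.1, fun h => ⟨h, fun t ht => ?_⟩⟩
    constructor
    · rw [Subsingleton.elim (cut (t + r) a) (0 : A)]; exact CuntzLE.zero _
    · rw [Subsingleton.elim (cut (t + r) b) (0 : A)]; exact CuntzLE.zero _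
  rw [dW, this, csInf_Ioi]

-- grid interpolation
lemma grid_interp {x y : A} (hx : 0 ≤ x) (hy : 0 ≤ y) {R η : ℝ} (hR : 0 < R) (hη : 0 < η)
    {K : ℕ} (hK : ‖x‖ ≤ K * η)
    (hgrid : ∀ k : ℕ, k < K → CuntzLE (cut (((k:ℝ)+1)*η + R) x) (cut (((k:ℝ)+1)*η) y)) :
    ∀ t : ℝ, 0 < t → CuntzLE (cut (t + (R + η)) x) (cut t y) := by
  intro t ht
  set k := ⌊t/η⌋₊ with hkdef
  have hk1 : (k:ℝ) * η ≤ t := by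
    rw [← le_div_iff₀ hη]
    exact Nat.floor_le (by positivity)
  by_cases hk : k < K
  · have hk2 : t < ((k:ℝ)+1)*η := by
      rw [← div_lt_iff₀ hη]
      exact Nat.lt_floor_add_one _
    have c1 : CuntzLE (cut (t + (R + η)) x) (cut (((k:ℝ)+1)*η + R) x) :=
      cuntz_cut_mono hx (by nlinarith)
    have c2 : CuntzLE (cut (((k:ℝ)+1)*η) y) (cut t y) :=
      cuntz_cut_mono hy (by nlinarith)
    exact (c1.trans (hgrid k hk)).trans c2
  · push_neg at hk
    have hKk : (K:ℝ) * η ≤ (k:ℝ) * η := by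
      have : (K:ℝ) ≤ (k:ℝ) := Nat.cast_le.mpr hk
      nlinarith
    rw [cut_eq_zero hx (by nlinarith)]
    exact CuntzLE.zero _

lemma conj_perturb (c v w : A) :
    ‖v * c * star v - w * c * star w‖ ≤ ‖v - w‖ * ‖c‖ * (‖v‖ + ‖w‖) := by
  have e1 : v * c * star v - w * c * star w
      = (v - w) * c * star v + w * c * star (v - w) := by
    rw [star_sub]; noncomm_ring
  rw [e1]
  calc ‖(v - w) * c * star v + w * c * star (v - w)‖
      ≤ ‖(v - w) * c * star v‖ + ‖w * c * star (v - w)‖ := norm_add_le _ _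
    _ ≤ ‖v - w‖ * ‖c‖ * ‖v‖ + ‖w‖ * ‖c‖ * ‖v - w‖ := by
        gcongr
        · calc ‖(v - w) * c * star v‖ ≤ ‖(v - w) * c‖ * ‖star v‖ := norm_mul_le _ _
            _ ≤ ‖v - w‖ * ‖c‖ * ‖star v‖ := by gcongr; exact norm_mul_le _ _
            _ = ‖v - w‖ * ‖c‖ * ‖v‖ := by rw [norm_star]
        · calc ‖w * c * star (v - w)‖ ≤ ‖w * c‖ * ‖star (v - w)‖ := norm_mul_le _ _
            _ ≤ ‖w‖ * ‖c‖ * ‖star (v - w)‖ := by gcongr; exact norm_mul_le _ _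
            _ = ‖w‖ * ‖c‖ * ‖v - w‖ := by rw [norm_star]
    _ = ‖v - w‖ * ‖c‖ * (‖v‖ + ‖w‖) := by ring

end dudw

section limits
variable {A : Type} [CStarAlgebra A] [PartialOrder A] [StarOrderedRing A]
  {B : ℕ → Type} [∀ n, CStarAlgebra (B n)] [∀ n, PartialOrder (B n)]
  [∀ n, StarOrderedRing (B n)]

lemma iso_norm {n : ℕ} (ι : B n →⋆ₐ[ℂ] A) (h : Isometry ι) (z : B n) : ‖ι z‖ = ‖z‖ := by
  simpa using h.norm_map_of_map_zero (map_zero _) z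

lemma iso_nonneg_iff {n : ℕ} (ι : B n →⋆ₐ[ℂ] A) (h : Isometry ι) (z : B n) :
    0 ≤ ι z ↔ 0 ≤ z := by
  constructor
  · intro hz
    have hinj : Function.Injective ι := h.injective
    have hsa : IsSelfAdjoint z := hinj (by rw [map_star, hz.isSelfAdjoint.star_eq])
    have hspec := hsa.map_spectrum_real ι hinj
    rw [StarOrderedRing.nonneg_iff_spectrum_nonneg (R := ℝ) z hsa, ← hspec]
    exact fun x hx => spectrum_nonneg_of_nonneg hz hx
  · intro hz
    have hsz : IsSelfAdjoint z := hz.isSelfAdjoint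
    set s : B n := cfc Real.sqrt z with hs
    have hss : s * s = z := by
      rw [hs, ← cfc_mul Real.sqrt Real.sqrt z Real.continuous_sqrt.continuousOn
        Real.continuous_sqrt.continuousOn]
      have : cfc (fun x => Real.sqrt x * Real.sqrt x) z = cfc (fun x : ℝ => x) z :=
        cfc_congr (fun x hx => Real.mul_self_sqrt (spectrum_nonneg_of_nonneg hz hx))
      rw [this, cfc_id' ℝ z hsz]
    have hssa : IsSelfAdjoint s := cfc_predicate _ z
    have : ι z = star (ι s) * ι s := by
      rw [← map_star, hssa.star_eq, ← map_mul, hss]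
    rw [this]
    exact star_mul_self_nonneg _

lemma unitary_map {n : ℕ} (ι : B n →⋆ₐ[ℂ] A) {u : B n} (hu : u ∈ unitary (B n)) :
    ι u ∈ unitary A := by
  rw [Unitary.mem_iff] at hu ⊢
  exact ⟨by rw [← map_star, ← map_mul, hu.1, map_one],
    by rw [← map_star, ← map_mul, hu.2, map_one]⟩

lemma cut_zero_near {a z : A} (ha : 0 ≤ a) (hz : IsSelfAdjoint z) {δ : ℝ} (hδ : 0 ≤ δ)
    (h : ‖a - z‖ ≤ δ) : ‖cut 0 z - z‖ ≤ δ := by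
  have haz : a ≤ z + algebraMap ℝ A δ := le_add_algebraMap_of_norm_le ha.isSelfAdjoint hz h
  have hz' : 0 ≤ z + algebraMap ℝ A δ := ha.trans haz
  have hspec : ∀ x ∈ spectrum ℝ z, -δ ≤ x := by
    intro x hx
    have hmem : x + δ ∈ spectrum ℝ (z + algebraMap ℝ A δ) := by
      rw [← spectrum.add_singleton_eq]
      exact Set.add_mem_add hx rfl
    linarith [spectrum_nonneg_of_nonneg hz' hmem]
  have heq : cut 0 z - z = cfc (fun x : ℝ => max (x - 0) 0 - x) z := by
    rw [cfc_sub (fun x : ℝ => max (x - 0) 0) (fun x : ℝ => x) z (by fun_prop) continuousOn_id,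
      cfc_id' ℝ z hz]
    rfl
  rw [heq]
  refine norm_cfc_le hδ fun x hx => ?_
  have := hspec x hx
  rcases le_total x 0 with h0 | h0
  · rw [sub_zero, max_eq_right h0, Real.norm_of_nonneg (by linarith), zero_sub, neg_le] at *
    linarith
  · rw [sub_zero, max_eq_left h0]
    simpa using hδ

lemma approx_pos (ι : ∀ n, B n →⋆ₐ[ℂ] A) (hisom : ∀ n, Isometry (ι n))
    (hdense : Dense (⋃ n, Set.range (ι n))) {a : A} (ha : 0 ≤ a) {δ : ℝ} (hδ : 0 < δ) :
    ∃ n, ∃ x : B n, 0 ≤ x ∧ ‖ι n x - a‖ < δ := by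
  have hmem := hdense a
  rw [Metric.mem_closure_iff] at hmem
  obtain ⟨z, hzmem, hdist⟩ := hmem (δ/3) (by positivity)
  rw [Set.mem_iUnion] at hzmem
  obtain ⟨n, w, rfl⟩ := hzmem
  rw [dist_eq_norm] at hdist
  set y : B n := (2:ℂ)⁻¹ • (w + star w) with hy
  have hstar2 : star ((2:ℂ)⁻¹) = (2:ℂ)⁻¹ := by simp
  have hysa : IsSelfAdjoint y := by
    rw [hy, IsSelfAdjoint, star_smul, star_add, star_star, hstar2, add_comm]
  have hιy : (ι n) y = (2:ℂ)⁻¹ • (ι n w + star (ι n w)) := by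
    rw [hy, map_smul, map_add, map_star]
  have hιysa : IsSelfAdjoint (ι n y) := by
    rw [IsSelfAdjoint, ← map_star, hysa.star_eq]
  have hdiffy : ι n y - a = (2:ℂ)⁻¹ • ((ι n w - a) + star (ι n w - a)) := by
    rw [hιy, star_sub, ha.isSelfAdjoint.star_eq]
    module
  have hnorm2 : ‖(2:ℂ)⁻¹‖ = 2⁻¹ := by simp
  have hnormy : ‖ι n y - a‖ < δ/3 := by
    rw [hdiffy, norm_smul, hnorm2]
    have h1 : ‖(ι n w - a) + star (ι n w - a)‖ ≤ ‖ι n w - a‖ + ‖ι n w - a‖ := by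
      calc ‖(ι n w - a) + star (ι n w - a)‖ ≤ ‖ι n w - a‖ + ‖star (ι n w - a)‖ := norm_add_le _ _
        _ = ‖ι n w - a‖ + ‖ι n w - a‖ := by rw [norm_star]
    have h2 : ‖ι n w - a‖ < δ/3 := by rwa [norm_sub_rev] at hdist
    calc (2:ℝ)⁻¹ * ‖(ι n w - a) + star (ι n w - a)‖ ≤ (2:ℝ)⁻¹ * (‖ι n w - a‖ + ‖ι n w - a‖) := by
          gcongr
      _ < δ/3 := by linarith
  refine ⟨n, cut 0 y, cut_nonneg _ _, ?_⟩
  have hmapcut : ι n (cut 0 y) = cut 0 (ι n y) := map_cut (ι n) (hisom n).continuous hysa 0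
  have hzero : ‖cut 0 (ι n y) - ι n y‖ ≤ δ/3 :=
    cut_zero_near ha hιysa (by positivity) (by rw [norm_sub_rev]; exact hnormy.le)
  calc ‖ι n (cut 0 y) - a‖ = ‖(cut 0 (ι n y) - ι n y) + (ι n y - a)‖ := by
        rw [hmapcut, sub_add_sub_cancel]
    _ ≤ ‖cut 0 (ι n y) - ι n y‖ + ‖ι n y - a‖ := norm_add_le _ _
    _ < δ/3 + δ/3 := by linarith
    _ < δ := by linarith

end limits
/-- If `A` is a sequential inductive limit of C*-algebras `B n` (modelled by isometric
unital embeddings with increasing ranges and dense union) in each of which `d_U = d_W`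
on positive elements, then `d_U(a,b) ≤ d_W^{B n}(a,b)` for positive `a, b ∈ B n`, and
consequently `d_U = d_W` on all positive elements of `A`. -/
theorem dU_eq_dW_of_inductive_limit (A : Type) [CStarAlgebra A] [PartialOrder A]
    [StarOrderedRing A] (B : ℕ → Type) [∀ n, CStarAlgebra (B n)]
    [∀ n, PartialOrder (B n)] [∀ n, StarOrderedRing (B n)]
    (ι : ∀ n, B n →⋆ₐ[ℂ] A) (hisom : ∀ n, Isometry (ι n))
    (hmono : ∀ n, Set.range (ι n) ⊆ Set.range (ι (n + 1)))
    (hdense : Dense (⋃ n, Set.range (ι n)))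
    (hBn : ∀ n, ∀ x y : B n, 0 ≤ x → 0 ≤ y → dU x y = dW x y) :
    (∀ n, ∀ x y : B n, 0 ≤ x → 0 ≤ y → dU (ι n x) (ι n y) ≤ dW x y) ∧
    (∀ a b : A, 0 ≤ a → 0 ≤ b → dU a b = dW a b) := by
  have part1 : ∀ n, ∀ x y : B n, 0 ≤ x → 0 ≤ y → dU (ι n x) (ι n y) ≤ dW x y := by
    intro n x y hx hy
    rw [← hBn n x y hx hy]
    refine csInf_le_csInf (uSet_bddBelow _ _) (uSet_nonempty x y) ?_
    rintro r ⟨u, hu, rfl⟩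
    refine ⟨ι n u, unitary_map (ι n) hu, ?_⟩
    rw [← map_star, ← map_mul, ← map_mul, ← map_sub, iso_norm (ι n) (hisom n)]
  refine ⟨part1, fun a b ha hb => ?_⟩
  rcases subsingleton_or_nontrivial A with hS | hNT
  · rw [dU_subsingleton, dW_subsingleton]
  · refine le_antisymm ?_ (dW_le_dU ha hb)
    refine le_of_forall_pos_le_add fun ε₀ hε₀ => ?_
    set ε := ε₀/11 with hεdef
    have hε : 0 < ε := by positivity
    -- a suitable element of the dW set
    set S : Set ℝ := {r : ℝ | 0 < r ∧ ∀ t : ℝ, 0 < t →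
      CuntzLE (cut (t + r) a) (cut t b) ∧ CuntzLE (cut (t + r) b) (cut t a)} with hSdef
    have hdWS : dW a b = sInf S := rfl
    obtain ⟨r, hrS, hrlt⟩ := exists_lt_of_csInf_lt ⟨_, wSet_mem_big ha hb⟩
      (show sInf S < dW a b + ε by rw [← hdWS]; linarith)
    obtain ⟨hr_pos, hr_prop⟩ := hrS
    -- range monotonicity
    have hrange : ∀ {n m : ℕ}, n ≤ m → Set.range (ι n) ⊆ Set.range (ι m) := by
      intro n m h
      induction h with
      | refl => exact subset_rfl
      | step _ ih => exact ih.trans (hmono _)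
    -- approximations
    obtain ⟨N1, x0, hx0, hx0a⟩ := approx_pos ι hisom hdense ha hε
    obtain ⟨N2, y0, hy0, hy0b⟩ := approx_pos ι hisom hdense hb hε
    set N₀ := max N1 N2 with hN₀
    obtain ⟨x₁, hx₁⟩ := hrange (le_max_left N1 N2) ⟨x0, rfl⟩
    obtain ⟨y₁, hy₁⟩ := hrange (le_max_right N1 N2) ⟨y0, rfl⟩
    set ax := ι N1 x0 with haxdef
    set ay := ι N2 y0 with haydef
    have hax_pos : 0 ≤ ax := (iso_nonneg_iff (ι N1) (hisom N1) x0).2 hx0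
    have hay_pos : 0 ≤ ay := (iso_nonneg_iff (ι N2) (hisom N2) y0).2 hy0
    have haxa : ‖ax - a‖ < ε := hx0a
    have hayb : ‖ay - b‖ < ε := hy0b
    -- the chain of Cuntz comparisons in A
    set R := r + 4*ε with hRdef
    have hchain1 : ∀ t : ℝ, 0 < t → CuntzLE (cut (t + R) ax) (cut t ay) := by
      intro t ht
      have q1 : CuntzLE (cut ((t+r+2*ε) + ε + ε) ax) (cut (t+r+2*ε) a) :=
        cuntz_of_norm hax_pos ha haxa.le (by positivity) hε
      have q2 := (hr_prop (t+2*ε) (by positivity)).1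
      have q3 : CuntzLE (cut (t + ε + ε) b) (cut t ay) :=
        cuntz_of_norm hb hay_pos (by rw [norm_sub_rev]; exact hayb.le) ht.le hε
      have q1' : CuntzLE (cut (t + R) ax) (cut (t+r+2*ε) a) := by
        rwa [show (t+r+2*ε) + ε + ε = t + R from by rw [hRdef]; ring] at q1
      have q2' : CuntzLE (cut (t+r+2*ε) a) (cut (t+2*ε) b) := by
        rwa [show t+2*ε+r = t+r+2*ε from by ring] at q2
      have q3' : CuntzLE (cut (t+2*ε) b) (cut t ay) := by
        rwa [show t+ε+ε = t+2*ε from by ring] at q3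
      exact (q1'.trans q2').trans q3'
    have hchain2 : ∀ t : ℝ, 0 < t → CuntzLE (cut (t + R) ay) (cut t ax) := by
      intro t ht
      have q1 : CuntzLE (cut ((t+r+2*ε) + ε + ε) ay) (cut (t+r+2*ε) b) :=
        cuntz_of_norm hay_pos hb hayb.le (by positivity) hε
      have q2 := (hr_prop (t+2*ε) (by positivity)).2
      have q3 : CuntzLE (cut (t + ε + ε) a) (cut t ax) :=
        cuntz_of_norm ha hax_pos (by rw [norm_sub_rev]; exact haxa.le) ht.le hε
      have q1' : CuntzLE (cut (t + R) ay) (cut (t+r+2*ε) b) := by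
        rwa [show (t+r+2*ε) + ε + ε = t + R from by rw [hRdef]; ring] at q1
      have q2' : CuntzLE (cut (t+r+2*ε) b) (cut (t+2*ε) a) := by
        rwa [show t+2*ε+r = t+r+2*ε from by ring] at q2
      have q3' : CuntzLE (cut (t+2*ε) a) (cut t ax) := by
        rwa [show t+ε+ε = t+2*ε from by ring] at q3
      exact (q1'.trans q2').trans q3'
    -- the grid size
    set K : ℕ := ⌈(max ‖ax‖ ‖ay‖)/ε⌉₊ with hKdef
    have hKbound : max ‖ax‖ ‖ay‖ ≤ K * ε := by
      rw [← div_le_iff₀ hε]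
      exact Nat.le_ceil _
    -- select approximate implementing elements from the union
    have hsel : ∀ k : ℕ, ∃ (w₁ w₂ : A) (m : ℕ), w₁ ∈ Set.range (ι m) ∧ w₂ ∈ Set.range (ι m) ∧
        (k < K → ‖cut (((k:ℝ)+1)*ε + R) ax - w₁ * cut (((k:ℝ)+1)*ε) ay * star w₁‖ ≤ 2*ε ∧
                 ‖cut (((k:ℝ)+1)*ε + R) ay - w₂ * cut (((k:ℝ)+1)*ε) ax * star w₂‖ ≤ 2*ε) := by
      intro k
      by_cases hk : k < K
      · set t₀ : ℝ := ((k:ℝ)+1)*ε with ht₀def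
        have ht₀ : 0 < t₀ := by positivity
        have happrox : ∀ (c d : A), CuntzLE c d →
            ∃ w ∈ ⋃ n, Set.range (ι n), ‖c - w * d * star w‖ ≤ 2*ε := by
          intro c d hcd
          obtain ⟨v, hv⟩ := hcd
          obtain ⟨j, hj⟩ := (hv.eventually (gt_mem_nhds hε)).exists
          set v0 := v j with hv0
          set D : ℝ := ‖d‖ * (2*‖v0‖+1) with hD
          have hD0 : 0 ≤ D := by positivity
          set δw : ℝ := min 1 (ε / (D + 1)) with hδw
          have hδw0 : 0 < δw := lt_min one_pos (by positivity)
          obtain ⟨z, hzmem, hzd⟩ := Metric.mem_closure_iff.mp (hdense v0) δw hδw0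
          rw [dist_eq_norm] at hzd
          refine ⟨z, hzmem, ?_⟩
          have hzn : ‖z‖ ≤ ‖v0‖ + 1 := by
            have : ‖z‖ - ‖v0‖ ≤ ‖v0 - z‖ := by
              rw [norm_sub_rev]
              exact (norm_sub_norm_le _ _).trans le_rfl
            have hδw1 : δw ≤ 1 := min_le_left _ _
            linarith
          have hpert : ‖v0 * d * star v0 - z * d * star z‖ ≤ ε := by
            have h1 := conj_perturb d v0 z
            have h2 : ‖v0 - z‖ * ‖d‖ * (‖v0‖ + ‖z‖) ≤ δw * (D + 1) := by
              have hb1 : ‖v0‖ + ‖z‖ ≤ 2*‖v0‖+1 := by linarith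
              calc ‖v0 - z‖ * ‖d‖ * (‖v0‖ + ‖z‖) ≤ δw * ‖d‖ * (2*‖v0‖+1) := by
                    gcongr <;> positivity
                _ = δw * D := by rw [hD]; ring
                _ ≤ δw * (D+1) := by nlinarith
            have h3 : δw * (D + 1) ≤ ε := by
              have : δw ≤ ε / (D+1) := min_le_right _ _
              calc δw * (D+1) ≤ (ε / (D+1)) * (D+1) :=
                    mul_le_mul_of_nonneg_right this (by linarith)
                _ = ε := by field_simp
            linarith
          calc ‖c - z * d * star z‖
              ≤ ‖c - v0 * d * star v0‖ + ‖v0 * d * star v0 - z * d * star z‖ := by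
                rw [show c - z * d * star z
                  = (c - v0 * d * star v0) + (v0 * d * star v0 - z * d * star z) from by abel]
                exact norm_add_le _ _
            _ ≤ ε + ε := add_le_add hj.le hpert
            _ = 2*ε := by ring
        obtain ⟨w₁, hw₁mem, hw₁⟩ := happrox _ _ (hchain1 t₀ ht₀)
        obtain ⟨w₂, hw₂mem, hw₂⟩ := happrox _ _ (hchain2 t₀ ht₀)
        rw [Set.mem_iUnion] at hw₁mem hw₂mem
        obtain ⟨m₁, hm₁⟩ := hw₁mem
        obtain ⟨m₂, hm₂⟩ := hw₂mem
        exact ⟨w₁, w₂, max m₁ m₂, hrange (le_max_left _ _) hm₁,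
          hrange (le_max_right _ _) hm₂, fun _ => ⟨hw₁, hw₂⟩⟩
      · exact ⟨0, 0, 0, ⟨0, map_zero _⟩, ⟨0, map_zero _⟩, fun hkk => absurd hkk hk⟩
    choose w₁ w₂ lv hw₁mem hw₂mem hwprop using hsel
    -- the common level M
    set M : ℕ := max N₀ ((Finset.range K).sup lv) with hM
    have hN₀M : N₀ ≤ M := le_max_left _ _
    have hlvle : ∀ k, k < K → lv k ≤ M := fun k hk =>
      le_max_of_le_right (Finset.le_sup (Finset.mem_range.2 hk))
    have haxN₀ : ι N₀ x₁ = ax := hx₁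
    have hayN₀ : ι N₀ y₁ = ay := hy₁
    obtain ⟨x', hx'⟩ := hrange hN₀M ⟨x₁, haxN₀⟩
    obtain ⟨y', hy'⟩ := hrange hN₀M ⟨y₁, hayN₀⟩
    have hx'pos : 0 ≤ x' := (iso_nonneg_iff (ι M) (hisom M) x').1 (hx' ▸ hax_pos)
    have hy'pos : 0 ≤ y' := (iso_nonneg_iff (ι M) (hisom M) y').1 (hy' ▸ hay_pos)
    have hx'sa : IsSelfAdjoint x' := hx'pos.isSelfAdjoint
    have hy'sa : IsSelfAdjoint y' := hy'pos.isSelfAdjoint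
    -- grid conditions in B M
    have hgrid1 : ∀ k : ℕ, k < K →
        CuntzLE (cut (((k:ℝ)+1)*ε + (R + 3*ε)) x') (cut (((k:ℝ)+1)*ε) y') := by
      intro k hk
      obtain ⟨ω, hω⟩ := hrange (hlvle k hk) (hw₁mem k)
      set t₀ : ℝ := ((k:ℝ)+1)*ε with ht₀def
      have hb1 := (hwprop k hk).1
      have e1 : ι M (cut (t₀ + R) x' - ω * cut t₀ y' * star ω)
          = cut (t₀ + R) ax - w₁ k * cut t₀ ay * star (w₁ k) := by
        rw [map_sub, map_mul, map_mul, map_star, map_cut (ι M) (hisom M).continuous hx'sa,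
          map_cut (ι M) (hisom M).continuous hy'sa, hx', hy', hω]
      have hBMnorm : ‖cut (t₀ + R) x' - ω * cut t₀ y' * star ω‖ ≤ 2*ε := by
        rw [← iso_norm (ι M) (hisom M), e1]; exact hb1
      have hcc := cuntz_of_norm_conj (cut_nonneg (t₀ + R) x') (cut_nonneg t₀ y')
        (by positivity : (0:ℝ) ≤ 2*ε) hε hBMnorm
      rw [cut_cut hx'sa (by positivity : (0:ℝ) ≤ 2*ε + ε)] at hcc
      rwa [show 2*ε + ε + (t₀ + R) = t₀ + (R + 3*ε) from by ring] at hcc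
    have hgrid2 : ∀ k : ℕ, k < K →
        CuntzLE (cut (((k:ℝ)+1)*ε + (R + 3*ε)) y') (cut (((k:ℝ)+1)*ε) x') := by
      intro k hk
      obtain ⟨ω, hω⟩ := hrange (hlvle k hk) (hw₂mem k)
      set t₀ : ℝ := ((k:ℝ)+1)*ε with ht₀def
      have hb2 := (hwprop k hk).2
      have e1 : ι M (cut (t₀ + R) y' - ω * cut t₀ x' * star ω)
          = cut (t₀ + R) ay - w₂ k * cut t₀ ax * star (w₂ k) := by
        rw [map_sub, map_mul, map_mul, map_star, map_cut (ι M) (hisom M).continuous hy'sa,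
          map_cut (ι M) (hisom M).continuous hx'sa, hx', hy', hω]
      have hBMnorm : ‖cut (t₀ + R) y' - ω * cut t₀ x' * star ω‖ ≤ 2*ε := by
        rw [← iso_norm (ι M) (hisom M), e1]; exact hb2
      have hcc := cuntz_of_norm_conj (cut_nonneg (t₀ + R) y') (cut_nonneg t₀ x')
        (by positivity : (0:ℝ) ≤ 2*ε) hε hBMnorm
      rw [cut_cut hy'sa (by positivity : (0:ℝ) ≤ 2*ε + ε)] at hcc
      rwa [show 2*ε + ε + (t₀ + R) = t₀ + (R + 3*ε) from by ring] at hcc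
    -- grid interpolation in B M
    have hR' : 0 < R + 3*ε := by rw [hRdef]; linarith
    have hx'norm : ‖x'‖ ≤ K * ε := by
      rw [← iso_norm (ι M) (hisom M), hx']
      exact (le_max_left _ _).trans hKbound
    have hy'norm : ‖y'‖ ≤ K * ε := by
      rw [← iso_norm (ι M) (hisom M), hy']
      exact (le_max_right _ _).trans hKbound
    have hint1 := grid_interp hx'pos hy'pos hR' hε hx'norm hgrid1
    have hint2 := grid_interp hy'pos hx'pos hR' hε hy'norm hgrid2
    have hdWle : dW x' y' ≤ R + 3*ε + ε := by
      refine csInf_le (wSet_bddBelow _ _) ⟨by linarith, fun t ht => ⟨?_, ?_⟩⟩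
      · have := hint1 t ht
        rwa [show t + (R + 3*ε + ε) = t + (R + 3*ε + ε) from rfl] at this
      · exact hint2 t ht
    -- conclusion
    have hfinal : dU a b ≤ dW x' y' + 2*ε := by
      have hl := dU_lip a b (ι M x') (ι M y')
      have hp := part1 M x' y' hx'pos hy'pos
      have hn1 : ‖a - ι M x'‖ ≤ ε := by rw [hx', norm_sub_rev]; exact haxa.le
      have hn2 : ‖b - ι M y'‖ ≤ ε := by rw [hy', norm_sub_rev]; exact hayb.le
      calc dU a b ≤ dU (ι M x') (ι M y') + (‖a - ι M x'‖ + ‖b - ι M y'‖) := hl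
        _ ≤ dW x' y' + (ε + ε) := by gcongr
        _ = dW x' y' + 2*ε := by ring
    have : dU a b ≤ r + 10*ε := by
      have : R + 3*ε + ε + 2*ε = r + 10*ε := by rw [hRdef]; ring
      linarith [hfinal, hdWle]
    have hεfin : r + 10*ε ≤ dW a b + ε₀ := by
      have h11 : (11:ℝ) * ε = ε₀ := by rw [hεdef]; ring
      linarith
    linarith
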